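/- Define the conjunction of conditional events as the conditional random quantity (A|H) ∧ (B|K) := (AHBK + x·¬HBK + y·AH¬K) | (H ∨ K) where x = P(A|H), y = P(B|K). If A, B, H, K are stochastically independent events with P(H∨K) > 0, then ℙ[(A|H) ∧ (B|K)] = P(A)·P(B). -/

import Mathlib

/-- Prevision of the conjunction of conditional random quantities under
stochastic independence.  For a finitely additive probability `P` and
stochastically independent events `A, B, H, K` with `P(H) > 0`, `P(K) > 0`,
`P(H∨K) > 0`, setting `x = P(A|H) = P(AH)/P(H)` and `y = P(B|K) = P(BK)/P(K)`,
the prevision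
`ℙ[(A|H) ∧ (B|K)] = [P(AHBK) + x·P(¬HBK) + y·P(AH¬K)] / P(H∨K)`
of `(A|H) ∧ (B|K) := (AHBK + x·¬HBK + y·AH¬K)|(H∨K)` equals `P(A)·P(B)`. -/
theorem prevision_conj_of_indep {Ω : Type*} (P : Set Ω → ℝ) (A B H K : Set Ω)
    (x y : ℝ)
    (hP1 : P Set.univ = 1)
    (hPnonneg : ∀ S : Set Ω, 0 ≤ P S)
    (hPadd : ∀ S T : Set Ω, Disjoint S T → P (S ∪ T) = P S + P T)
    (hInd : ∀ A' B' H' K' : Set Ω,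
      (A' = A ∨ A' = Aᶜ) → (B' = B ∨ B' = Bᶜ) →
      (H' = H ∨ H' = Hᶜ) → (K' = K ∨ K' = Kᶜ) →
      P (A' ∩ B' ∩ H' ∩ K') = P A' * P B' * P H' * P K')
    (hH : 0 < P H) (hK : 0 < P K) (hHK : 0 < P (H ∪ K))
    (hx : x = P (A ∩ H) / P H) (hy : y = P (B ∩ K) / P K) :
    (P (A ∩ H ∩ B ∩ K) + x * P (Hᶜ ∩ B ∩ K) + y * P (A ∩ H ∩ Kᶜ)) / P (H ∪ K)
      = P A * P B := by
  have hsplit : ∀ S T : Set Ω, P S = P (S ∩ T) + P (S ∩ Tᶜ) := by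
    intro S T
    have h := hPadd (S ∩ T) (S ∩ Tᶜ) ((disjoint_compl_right).mono inf_le_right inf_le_right)
    rw [Set.inter_union_compl] at h
    exact h
  have hcompl : ∀ S : Set Ω, P Sᶜ = 1 - P S := by
    intro S
    have := hPadd S Sᶜ disjoint_compl_right
    rw [Set.union_compl_self, hP1] at this
    linarith
  -- canonical four-fold probabilities
  have hI := fun A' B' H' K' hA hB hHp hKp => hInd A' B' H' K' hA hB hHp hKp
  -- P (A ∩ H ∩ B ∩ K)
  have e1 : A ∩ H ∩ B ∩ K = A ∩ B ∩ H ∩ K := by ext z; simp [Set.mem_inter_iff]; tauto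
  have h1 : P (A ∩ H ∩ B ∩ K) = P A * P B * P H * P K := by
    rw [e1]; exact hInd A B H K (Or.inl rfl) (Or.inl rfl) (Or.inl rfl) (Or.inl rfl)
  -- P (Hᶜ ∩ B ∩ K)
  have h2 : P (Hᶜ ∩ B ∩ K) = P B * (1 - P H) * P K := by
    have e2 : Hᶜ ∩ B ∩ K ∩ A = A ∩ B ∩ Hᶜ ∩ K := by ext z; simp [Set.mem_inter_iff]; tauto
    have e3 : Hᶜ ∩ B ∩ K ∩ Aᶜ = Aᶜ ∩ B ∩ Hᶜ ∩ K := by ext z; simp [Set.mem_inter_iff]; tauto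
    rw [hsplit (Hᶜ ∩ B ∩ K) A, e2, e3,
      hInd A B Hᶜ K (Or.inl rfl) (Or.inl rfl) (Or.inr rfl) (Or.inl rfl),
      hInd Aᶜ B Hᶜ K (Or.inr rfl) (Or.inl rfl) (Or.inr rfl) (Or.inl rfl),
      hcompl A, hcompl H]
    ring
  -- P (A ∩ H ∩ Kᶜ)
  have h3 : P (A ∩ H ∩ Kᶜ) = P A * P H * (1 - P K) := by
    have e2 : A ∩ H ∩ Kᶜ ∩ B = A ∩ B ∩ H ∩ Kᶜ := by ext z; simp [Set.mem_inter_iff]; tauto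
    have e3 : A ∩ H ∩ Kᶜ ∩ Bᶜ = A ∩ Bᶜ ∩ H ∩ Kᶜ := by ext z; simp [Set.mem_inter_iff]; tauto
    rw [hsplit (A ∩ H ∩ Kᶜ) B, e2, e3,
      hInd A B H Kᶜ (Or.inl rfl) (Or.inl rfl) (Or.inl rfl) (Or.inr rfl),
      hInd A Bᶜ H Kᶜ (Or.inl rfl) (Or.inr rfl) (Or.inl rfl) (Or.inr rfl),
      hcompl B, hcompl K]
    ring
  -- P (A ∩ H)
  have h4 : P (A ∩ H) = P A * P H := by
    have e2 : A ∩ H ∩ B ∩ K = A ∩ B ∩ H ∩ K := e1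
    have e3 : A ∩ H ∩ B ∩ Kᶜ = A ∩ B ∩ H ∩ Kᶜ := by ext z; simp [Set.mem_inter_iff]; tauto
    have e4 : A ∩ H ∩ Bᶜ ∩ K = A ∩ Bᶜ ∩ H ∩ K := by ext z; simp [Set.mem_inter_iff]; tauto
    have e5 : A ∩ H ∩ Bᶜ ∩ Kᶜ = A ∩ Bᶜ ∩ H ∩ Kᶜ := by ext z; simp [Set.mem_inter_iff]; tauto
    rw [hsplit (A ∩ H) B, hsplit (A ∩ H ∩ B) K, hsplit (A ∩ H ∩ Bᶜ) K,
      e2, e3, e4, e5,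
      hInd A B H K (Or.inl rfl) (Or.inl rfl) (Or.inl rfl) (Or.inl rfl),
      hInd A B H Kᶜ (Or.inl rfl) (Or.inl rfl) (Or.inl rfl) (Or.inr rfl),
      hInd A Bᶜ H K (Or.inl rfl) (Or.inr rfl) (Or.inl rfl) (Or.inl rfl),
      hInd A Bᶜ H Kᶜ (Or.inl rfl) (Or.inr rfl) (Or.inl rfl) (Or.inr rfl),
      hcompl B, hcompl K]
    ring
  -- P (B ∩ K)
  have h5 : P (B ∩ K) = P B * P K := by
    have e2 : B ∩ K ∩ A ∩ H = A ∩ B ∩ H ∩ K := by ext z; simp [Set.mem_inter_iff]; tauto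
    have e3 : B ∩ K ∩ A ∩ Hᶜ = A ∩ B ∩ Hᶜ ∩ K := by ext z; simp [Set.mem_inter_iff]; tauto
    have e4 : B ∩ K ∩ Aᶜ ∩ H = Aᶜ ∩ B ∩ H ∩ K := by ext z; simp [Set.mem_inter_iff]; tauto
    have e5 : B ∩ K ∩ Aᶜ ∩ Hᶜ = Aᶜ ∩ B ∩ Hᶜ ∩ K := by ext z; simp [Set.mem_inter_iff]; tauto
    rw [hsplit (B ∩ K) A, hsplit (B ∩ K ∩ A) H, hsplit (B ∩ K ∩ Aᶜ) H,
      e2, e3, e4, e5,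
      hInd A B H K (Or.inl rfl) (Or.inl rfl) (Or.inl rfl) (Or.inl rfl),
      hInd A B Hᶜ K (Or.inl rfl) (Or.inl rfl) (Or.inr rfl) (Or.inl rfl),
      hInd Aᶜ B H K (Or.inr rfl) (Or.inl rfl) (Or.inl rfl) (Or.inl rfl),
      hInd Aᶜ B Hᶜ K (Or.inr rfl) (Or.inl rfl) (Or.inr rfl) (Or.inl rfl),
      hcompl A, hcompl H]
    ring
  -- P (H ∪ K)
  have hHcK : P (Hᶜ ∩ K) = (1 - P H) * P K := by
    have e2 : Hᶜ ∩ K ∩ A ∩ B = A ∩ B ∩ Hᶜ ∩ K := by ext z; simp [Set.mem_inter_iff]; tauto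
    have e3 : Hᶜ ∩ K ∩ A ∩ Bᶜ = A ∩ Bᶜ ∩ Hᶜ ∩ K := by ext z; simp [Set.mem_inter_iff]; tauto
    have e4 : Hᶜ ∩ K ∩ Aᶜ ∩ B = Aᶜ ∩ B ∩ Hᶜ ∩ K := by ext z; simp [Set.mem_inter_iff]; tauto
    have e5 : Hᶜ ∩ K ∩ Aᶜ ∩ Bᶜ = Aᶜ ∩ Bᶜ ∩ Hᶜ ∩ K := by ext z; simp [Set.mem_inter_iff]; tauto
    rw [hsplit (Hᶜ ∩ K) A, hsplit (Hᶜ ∩ K ∩ A) B, hsplit (Hᶜ ∩ K ∩ Aᶜ) B,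
      e2, e3, e4, e5,
      hInd A B Hᶜ K (Or.inl rfl) (Or.inl rfl) (Or.inr rfl) (Or.inl rfl),
      hInd A Bᶜ Hᶜ K (Or.inl rfl) (Or.inr rfl) (Or.inr rfl) (Or.inl rfl),
      hInd Aᶜ B Hᶜ K (Or.inr rfl) (Or.inl rfl) (Or.inr rfl) (Or.inl rfl),
      hInd Aᶜ Bᶜ Hᶜ K (Or.inr rfl) (Or.inr rfl) (Or.inr rfl) (Or.inl rfl),
      hcompl A, hcompl B, hcompl H]
    ring
  have h6 : P (H ∪ K) = P H + (1 - P H) * P K := by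
    have e : H ∪ K = H ∪ (Hᶜ ∩ K) := by ext z; simp [Set.mem_inter_iff]; tauto
    have d : Disjoint H (Hᶜ ∩ K) :=
      (disjoint_compl_right).mono_right inf_le_left
    rw [e, hPadd _ _ d, hHcK]
  have hxA : x = P A := by rw [hx, h4]; field_simp
  have hyB : y = P B := by rw [hy, h5]; field_simp
  have hd : P H + (1 - P H) * P K ≠ 0 := by rw [← h6]; exact hHK.ne'
  rw [h1, h2, h3, h6, hxA, hyB]
  rw [div_eq_iff hd]
  ring
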